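/- For all real numbers r1, r2 ≥ 0 with (r1, r2) ≠ (0, 0), one has K₀(√(r1² + r2²)) = ∫₁^∞ (u² − 1)^{−1/2} · exp(−((r1 + r2)/√2)·u) · cos(((r1 − r2)/√2)·√(u² − 1)) du. -/

import Mathlib

open MeasureTheory

noncomputable section

/-- The modified Bessel function of the second kind `K₀`, via its integral representation
`K₀(z) = ∫₁^∞ e^{−zt} (t² − 1)^{−1/2} dt`. -/
def K0 (z : ℝ) : ℝ := ∫ t in Set.Ioi (1:ℝ), Real.exp (-z*t) / Real.sqrt (t^2 - 1)

namespace K0Aux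

open Real Set Filter

lemma sq_sub_one_pos {u : ℝ} (hu : 1 < u) : 0 < u^2 - 1 := by nlinarith

lemma w_pos {u : ℝ} (hu : 1 < u) : 0 < Real.sqrt (u^2 - 1) :=
  Real.sqrt_pos.2 (sq_sub_one_pos hu)

lemma hasDerivAt_w {u : ℝ} (hu : 1 < u) :
    HasDerivAt (fun u : ℝ => Real.sqrt (u^2 - 1)) (u / Real.sqrt (u^2 - 1)) u := by
  have h : HasDerivAt (fun u : ℝ => u^2 - 1) (2*u) u := by
    simpa using ((hasDerivAt_pow 2 u).sub_const 1)
  have h2 := h.sqrt (ne_of_gt (sq_sub_one_pos hu))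
  convert h2 using 1
  have hw := (w_pos hu).ne'
  field_simp

/-- The `u`-derivative of `exp (-a u) * sin (d √(u²-1))`. -/
def gd (a d u : ℝ) : ℝ :=
  Real.exp (-a*u) * (-a * Real.sin (d * Real.sqrt (u^2-1))
    + d * u / Real.sqrt (u^2-1) * Real.cos (d * Real.sqrt (u^2-1)))

lemma hasDerivAt_g (a d : ℝ) {u : ℝ} (hu : 1 < u) :
    HasDerivAt (fun u : ℝ => Real.exp (-a*u) * Real.sin (d * Real.sqrt (u^2-1)))
      (gd a d u) u := by
  have hw := hasDerivAt_w hu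
  have h1 : HasDerivAt (fun u : ℝ => Real.exp (-a*u)) (Real.exp (-a*u) * (-a)) u := by
    have : HasDerivAt (fun u : ℝ => -a*u) (-a) u := by
      simpa using (hasDerivAt_id u).const_mul (-a)
    exact this.exp
  have h2 : HasDerivAt (fun u : ℝ => Real.sin (d * Real.sqrt (u^2-1)))
      (Real.cos (d * Real.sqrt (u^2-1)) * (d * (u / Real.sqrt (u^2-1)))) u :=
    (hw.const_mul d).sin
  have := h1.mul h2
  refine this.congr_deriv ?_
  unfold gd
  ring

lemma continuousOn_w : ContinuousOn (fun u : ℝ => Real.sqrt (u^2 - 1)) (Set.Ioi 1) := by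
  fun_prop

lemma continuousOn_frac : ContinuousOn (fun u : ℝ => u / Real.sqrt (u^2-1)) (Set.Ioi 1) :=
  ContinuousOn.div (by fun_prop) continuousOn_w (fun x hx => (w_pos hx).ne')

lemma continuousOn_base (c : ℝ) :
    ContinuousOn (fun u : ℝ => Real.exp (-c*u) * (u / Real.sqrt (u^2-1))) (Set.Ioi 1) :=
  ContinuousOn.mul (by fun_prop) continuousOn_frac

/-- Integrability of the basic dominating function. -/
lemma integrableOn_base {c : ℝ} (hc : 0 < c) :
    IntegrableOn (fun u : ℝ => Real.exp (-c*u) * (u / Real.sqrt (u^2-1))) (Set.Ioi 1) := by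
  have hunion : Set.Ioc (1:ℝ) 2 ∪ Set.Ioi 2 = Set.Ioi 1 :=
    Set.Ioc_union_Ioi_eq_Ioi (by norm_num)
  rw [← hunion]
  apply MeasureTheory.IntegrableOn.union
  · -- on Ioc 1 2 : dominated by u / √(u²-1), which is the derivative of √(u²-1)
    have hι : IntegrableOn (fun u : ℝ => u / Real.sqrt (u^2-1)) (Set.Ioc 1 2) := by
      apply intervalIntegral.integrableOn_deriv_of_nonneg
        (g := fun u : ℝ => Real.sqrt (u^2-1))
      · fun_prop
      · intro x hx; exact hasDerivAt_w hx.1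
      · intro x hx
        have hx1 : (0:ℝ) < x := lt_trans one_pos hx.1
        positivity
    apply hι.mono'
    · exact ((continuousOn_base c).mono Set.Ioc_subset_Ioi_self).aestronglyMeasurable
        measurableSet_Ioc
    · filter_upwards [ae_restrict_mem measurableSet_Ioc] with u hu
      have hu1 : (1:ℝ) < u := hu.1
      have hupos : (0:ℝ) < u := lt_trans one_pos hu1
      have hwpos := w_pos hu1
      have hexp : Real.exp (-c*u) ≤ 1 := by
        apply Real.exp_le_one_iff.2
        nlinarith
      have hfrac : 0 ≤ u / Real.sqrt (u^2-1) := by positivity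
      rw [Real.norm_eq_abs, abs_mul, abs_of_pos (Real.exp_pos _), abs_of_nonneg hfrac]
      nlinarith [Real.exp_pos (-c*u)]
  · -- on Ioi 2 : u/√(u²-1) ≤ 2, dominated by 2 exp(-c u)
    have hg : IntegrableOn (fun u : ℝ => 2 * Real.exp (-c*u)) (Set.Ioi 2) :=
      (exp_neg_integrableOn_Ioi 2 hc).const_mul 2
    apply hg.mono'
    · exact ((continuousOn_base c).mono (Set.Ioi_subset_Ioi one_le_two)).aestronglyMeasurable
        measurableSet_Ioi
    · filter_upwards [ae_restrict_mem measurableSet_Ioi] with u hu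
      have hu2 : (2:ℝ) < u := hu
      have hu1 : (1:ℝ) < u := lt_trans one_lt_two hu2
      have hwpos := w_pos hu1
      have hhalf : u / 2 ≤ Real.sqrt (u^2-1) := by
        rw [show u/2 = Real.sqrt ((u/2)^2) from (Real.sqrt_sq (by positivity)).symm]
        exact Real.sqrt_le_sqrt (by nlinarith)
      have hfrac : u / Real.sqrt (u^2-1) ≤ 2 := by
        rw [div_le_iff₀ hwpos]; nlinarith
      have hfrac0 : 0 ≤ u / Real.sqrt (u^2-1) := by positivity
      rw [Real.norm_eq_abs, abs_mul, abs_of_pos (Real.exp_pos _), abs_of_nonneg hfrac0]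
      nlinarith [Real.exp_pos (-c*u)]

lemma integrableOn_exp {c : ℝ} (hc : 0 < c) :
    IntegrableOn (fun u : ℝ => Real.exp (-c*u)) (Set.Ioi 1) :=
  exp_neg_integrableOn_Ioi 1 hc

lemma continuousOn_gd (a d : ℝ) : ContinuousOn (gd a d) (Set.Ioi 1) := by
  unfold gd
  apply ContinuousOn.mul (by fun_prop)
  apply ContinuousOn.add (by fun_prop)
  exact ContinuousOn.mul
    (ContinuousOn.div (by fun_prop) continuousOn_w (fun x hx => (w_pos hx).ne'))
    (by fun_prop)

lemma gd_bound {a d u : ℝ} (hu : 1 < u) :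
    ‖gd a d u‖ ≤ |a| * Real.exp (-a*u) + |d| * (Real.exp (-a*u) * (u / Real.sqrt (u^2-1))) := by
  have hwpos := w_pos hu
  have hupos : (0:ℝ) < u := lt_trans one_pos hu
  have hs : |Real.sin (d * Real.sqrt (u^2-1))| ≤ 1 := Real.abs_sin_le_one _
  have hcos : |Real.cos (d * Real.sqrt (u^2-1))| ≤ 1 := Real.abs_cos_le_one _
  have e1 : |(-a) * Real.sin (d * Real.sqrt (u^2-1))| ≤ |a| := by
    rw [abs_mul, abs_neg]
    calc |a| * |Real.sin (d * Real.sqrt (u^2-1))| ≤ |a| * 1 :=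
      mul_le_mul_of_nonneg_left hs (abs_nonneg a)
    _ = |a| := mul_one _
  have e2 : |d * u / Real.sqrt (u^2-1) * Real.cos (d * Real.sqrt (u^2-1))| ≤
      |d| * (u / Real.sqrt (u^2-1)) := by
    rw [abs_mul, abs_div, abs_mul, abs_of_pos hupos, abs_of_pos hwpos]
    have h0 : 0 ≤ |d| * u / Real.sqrt (u^2-1) := by positivity
    calc |d| * u / Real.sqrt (u^2-1) * |Real.cos (d * Real.sqrt (u^2-1))| ≤
        |d| * u / Real.sqrt (u^2-1) * 1 := mul_le_mul_of_nonneg_left hcos h0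
    _ = |d| * (u / Real.sqrt (u^2-1)) := by rw [mul_one, mul_div_assoc]
  have key : |(-a * Real.sin (d * Real.sqrt (u^2-1))
      + d * u / Real.sqrt (u^2-1) * Real.cos (d * Real.sqrt (u^2-1)))| ≤
      |a| + |d| * (u / Real.sqrt (u^2-1)) := by
    refine (abs_add_le _ _).trans ?_
    linarith
  unfold gd
  rw [Real.norm_eq_abs, abs_mul, abs_of_pos (Real.exp_pos _)]
  calc Real.exp (-a*u) * |(-a * Real.sin (d * Real.sqrt (u^2-1))
      + d * u / Real.sqrt (u^2-1) * Real.cos (d * Real.sqrt (u^2-1)))| ≤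
      Real.exp (-a*u) * (|a| + |d| * (u / Real.sqrt (u^2-1))) :=
    mul_le_mul_of_nonneg_left key (Real.exp_pos _).le
  _ = |a| * Real.exp (-a*u) + |d| * (Real.exp (-a*u) * (u / Real.sqrt (u^2-1))) := by ring

lemma integrableOn_gd {a : ℝ} (d : ℝ) (ha : 0 < a) :
    IntegrableOn (gd a d) (Set.Ioi 1) := by
  have hg : IntegrableOn (fun u : ℝ => |a| * Real.exp (-a*u)
      + |d| * (Real.exp (-a*u) * (u / Real.sqrt (u^2-1)))) (Set.Ioi 1) :=
    ((integrableOn_exp ha).const_mul _).add ((integrableOn_base ha).const_mul _)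
  apply hg.mono'
  · exact (continuousOn_gd a d).aestronglyMeasurable measurableSet_Ioi
  · filter_upwards [ae_restrict_mem measurableSet_Ioi] with u hu
    exact gd_bound hu

/-- The fundamental vanishing: the integral of a total derivative is zero. -/
lemma integral_gd_eq_zero {a : ℝ} (d : ℝ) (ha : 0 < a) :
    ∫ u in Set.Ioi (1:ℝ), gd a d u = 0 := by
  have hcont : ContinuousWithinAt
      (fun u : ℝ => Real.exp (-a*u) * Real.sin (d * Real.sqrt (u^2-1))) (Set.Ici 1) 1 := by
    apply Continuous.continuousWithinAt; fun_prop
  have hnorm : ∀ u : ℝ, ‖Real.exp (-a*u) * Real.sin (d * Real.sqrt (u^2-1))‖ ≤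
      Real.exp (-a*u) := by
    intro u
    rw [Real.norm_eq_abs, abs_mul, abs_of_pos (Real.exp_pos _)]
    nlinarith [Real.exp_pos (-a*u), Real.abs_sin_le_one (d * Real.sqrt (u^2-1)),
      abs_nonneg (Real.sin (d * Real.sqrt (u^2-1)))]
  have htend0 : Tendsto (fun u : ℝ => Real.exp (-a*u)) atTop (nhds 0) := by
    have h1 : Tendsto (fun u : ℝ => -a * u) atTop atBot :=
      Tendsto.const_mul_atTop_of_neg (neg_lt_zero.2 ha) tendsto_id
    exact Real.tendsto_exp_atBot.comp h1
  have htend : Tendsto (fun u : ℝ => Real.exp (-a*u) * Real.sin (d * Real.sqrt (u^2-1)))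
      atTop (nhds 0) := squeeze_zero_norm hnorm htend0
  have := MeasureTheory.integral_Ioi_of_hasDerivAt_of_tendsto hcont
    (fun x hx => hasDerivAt_g a d hx) (integrableOn_gd d ha) htend
  rw [this]
  norm_num

/-- `A z b = √(z² - b²)`. -/
def A (z b : ℝ) : ℝ := Real.sqrt (z^2 - b^2)

/-- `H z b u` is the integrand. -/
def H (z b u : ℝ) : ℝ :=
  Real.exp (-(A z b)*u) * Real.cos (b * Real.sqrt (u^2-1)) / Real.sqrt (u^2-1)

lemma A_pos {z b : ℝ} (hz : 0 < z) (hb : b^2 ≤ z^2/2) : 0 < A z b :=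
  Real.sqrt_pos.2 (by nlinarith)

lemma A_le {z b : ℝ} (hz : 0 < z) : A z b ≤ z := by
  unfold A
  calc Real.sqrt (z^2 - b^2) ≤ Real.sqrt (z^2) := Real.sqrt_le_sqrt (by nlinarith)
  _ = z := Real.sqrt_sq hz.le

lemma A_ge {z b : ℝ} (hb : b^2 ≤ z^2/2) : Real.sqrt (z^2/2) ≤ A z b :=
  Real.sqrt_le_sqrt (by nlinarith)

lemma hasDerivAt_A {z b : ℝ} (hb : b^2 < z^2) :
    HasDerivAt (fun b => A z b) (-b / A z b) b := by
  have h : HasDerivAt (fun b : ℝ => z^2 - b^2) (-(2*b)) b := by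
    simpa using ((hasDerivAt_pow 2 b).const_sub (z^2))
  have hne : z^2 - b^2 ≠ 0 := by nlinarith
  have h2 := h.sqrt hne
  have hApos : 0 < A z b := Real.sqrt_pos.2 (by nlinarith)
  refine h2.congr_deriv ?_
  unfold A
  ring

lemma hasDerivAt_H_b (z : ℝ) {u : ℝ} (hu : 1 < u) {b : ℝ} (hb : b^2 < z^2) :
    HasDerivAt (fun b => H z b u) ((A z b)⁻¹ * gd (A z b) b u) b := by
  have hApos : 0 < A z b := Real.sqrt_pos.2 (by nlinarith)
  have hwpos := w_pos hu
  have hA := hasDerivAt_A hb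
  have hE : HasDerivAt (fun b => Real.exp (-(A z b)*u))
      (Real.exp (-(A z b)*u) * (-(-b / A z b)*u)) b := ((hA.neg.mul_const u).exp)
  have hC : HasDerivAt (fun b => Real.cos (b * Real.sqrt (u^2-1)))
      (-Real.sin (b * Real.sqrt (u^2-1)) * Real.sqrt (u^2-1)) b :=
    (hasDerivAt_mul_const _).cos
  have := (hE.mul hC).div_const (Real.sqrt (u^2-1))
  refine this.congr_deriv ?_
  unfold gd
  field_simp [hApos.ne', hwpos.ne']
  ring

lemma continuousOn_H (z b : ℝ) : ContinuousOn (H z b) (Set.Ioi 1) := by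
  unfold H
  exact ContinuousOn.div (by fun_prop) continuousOn_w (fun x hx => (w_pos hx).ne')

lemma integrableOn_H {z b : ℝ} (hz : 0 < z) (hb : b^2 ≤ z^2/2) :
    IntegrableOn (H z b) (Set.Ioi 1) := by
  have hApos := A_pos hz hb
  apply (integrableOn_base hApos).mono'
  · exact (continuousOn_H z b).aestronglyMeasurable measurableSet_Ioi
  · filter_upwards [ae_restrict_mem measurableSet_Ioi] with u hu
    have hu1 : (1:ℝ) < u := hu
    have hwpos := w_pos hu1
    have hupos : (0:ℝ) < u := lt_trans one_pos hu1
    unfold H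
    rw [Real.norm_eq_abs, abs_div, abs_mul, abs_of_pos (Real.exp_pos _),
      abs_of_pos hwpos,
      show Real.exp (-(A z b)*u) * (u / Real.sqrt (u^2-1)) =
        Real.exp (-(A z b)*u) * u / Real.sqrt (u^2-1) from (mul_div_assoc _ _ _).symm]
    gcongr
    exact (Real.abs_cos_le_one _).trans hu1.le


lemma key {z b₀ : ℝ} (hz : 0 < z) (hb₀ : 0 ≤ b₀) (hb2 : b₀^2 ≤ z^2/2) :
    ∫ u in Set.Ioi (1:ℝ), H z b₀ u = ∫ u in Set.Ioi (1:ℝ), H z 0 u := by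
  have hbsq : ∀ b ∈ Set.Icc (0:ℝ) b₀, b^2 ≤ z^2/2 := by
    intro b hb
    have : b^2 ≤ b₀^2 := by nlinarith [hb.1, hb.2]
    linarith
  have hbsq' : ∀ b ∈ Set.Icc (0:ℝ) b₀, b^2 < z^2 := by
    intro b hb
    have := hbsq b hb
    nlinarith
  set a₀ := Real.sqrt (z^2/2) with ha₀def
  have ha₀ : 0 < a₀ := Real.sqrt_pos.2 (by positivity)
  have hA_cont : ContinuousOn (fun b : ℝ => A z b) (Set.Icc 0 b₀) := by
    unfold A; fun_prop
  -- Step 2 : FTC in the parameter b, for fixed u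
  have step2 : ∀ u ∈ Set.Ioi (1:ℝ), H z b₀ u - H z 0 u
      = ∫ b in Set.Ioc (0:ℝ) b₀, (A z b)⁻¹ * gd (A z b) b u := by
    intro u hu
    have hu1 : (1:ℝ) < u := hu
    have hwpos := w_pos hu1
    have hctd : ∀ b ∈ Set.uIcc (0:ℝ) b₀, HasDerivAt (fun b => H z b u)
        ((A z b)⁻¹ * gd (A z b) b u) b := by
      intro b hb
      rw [Set.uIcc_of_le hb₀] at hb
      exact hasDerivAt_H_b z hu1 (hbsq' b hb)
    have hii : IntervalIntegrable (fun b => (A z b)⁻¹ * gd (A z b) b u) volume 0 b₀ := by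
      apply ContinuousOn.intervalIntegrable
      rw [Set.uIcc_of_le hb₀]
      apply ContinuousOn.mul
      · exact ContinuousOn.inv₀ hA_cont (fun b hb => (A_pos hz (hbsq b hb)).ne')
      · unfold gd
        apply ContinuousOn.mul
        · exact Real.continuous_exp.comp_continuousOn (hA_cont.neg.mul continuousOn_const)
        · apply ContinuousOn.add
          · exact ContinuousOn.mul hA_cont.neg (by fun_prop)
          · exact ContinuousOn.mul (by fun_prop) (by fun_prop)
    have := intervalIntegral.integral_eq_sub_of_hasDerivAt hctd hii
    rw [intervalIntegral.integral_of_le hb₀] at this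
    rw [← this]
  -- Product integrability for Fubini
  have hMint : IntegrableOn (fun u : ℝ => a₀⁻¹ * (z * Real.exp (-a₀*u)
      + b₀ * (Real.exp (-a₀*u) * (u / Real.sqrt (u^2-1))))) (Set.Ioi 1) :=
    (((integrableOn_exp ha₀).const_mul z).add
      ((integrableOn_base ha₀).const_mul b₀)).const_mul a₀⁻¹
  have hprod : Integrable
      (Function.uncurry (fun u b => (A z b)⁻¹ * gd (A z b) b u))
      ((volume.restrict (Set.Ioi (1:ℝ))).prod (volume.restrict (Set.Ioc (0:ℝ) b₀))) := by
    have hMprod : Integrable (fun p : ℝ × ℝ => (a₀⁻¹ * (z * Real.exp (-a₀*p.1)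
        + b₀ * (Real.exp (-a₀*p.1) * (p.1 / Real.sqrt (p.1^2-1))))) * 1)
        ((volume.restrict (Set.Ioi (1:ℝ))).prod (volume.restrict (Set.Ioc (0:ℝ) b₀))) :=
      Integrable.mul_prod hMint (integrableOn_const measure_Ioc_lt_top.ne)
    apply hMprod.mono'
    · rw [Measure.prod_restrict]
      apply ContinuousOn.aestronglyMeasurable _ (measurableSet_Ioi.prod measurableSet_Ioc)
      have hS : ∀ p : ℝ × ℝ, p ∈ Set.Ioi (1:ℝ) ×ˢ Set.Ioc (0:ℝ) b₀ →
          p.2 ∈ Set.Icc (0:ℝ) b₀ ∧ 1 < p.1 := by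
        intro p hp
        exact ⟨⟨hp.2.1.le, hp.2.2⟩, hp.1⟩
      have hA2 : ContinuousOn (fun p : ℝ × ℝ => A z p.2)
          (Set.Ioi (1:ℝ) ×ˢ Set.Ioc (0:ℝ) b₀) := by
        unfold A; fun_prop
      have hw2 : ContinuousOn (fun p : ℝ × ℝ => Real.sqrt (p.1^2-1))
          (Set.Ioi (1:ℝ) ×ˢ Set.Ioc (0:ℝ) b₀) := by fun_prop
      apply ContinuousOn.mul
      · exact ContinuousOn.inv₀ hA2
          (fun p hp => (A_pos hz (hbsq _ (hS p hp).1)).ne')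
      · unfold gd
        apply ContinuousOn.mul
        · exact Real.continuous_exp.comp_continuousOn (hA2.neg.mul (by fun_prop))
        · apply ContinuousOn.add
          · apply ContinuousOn.mul hA2.neg
            exact Real.continuous_sin.comp_continuousOn ((by fun_prop : ContinuousOn
              (fun p : ℝ × ℝ => p.2) _).mul hw2)
          · apply ContinuousOn.mul
            · exact ContinuousOn.div (by fun_prop) hw2
                (fun p hp => (w_pos (hS p hp).2).ne')
            · exact Real.continuous_cos.comp_continuousOn ((by fun_prop : ContinuousOn
                (fun p : ℝ × ℝ => p.2) _).mul hw2)
    · rw [Measure.prod_restrict]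
      filter_upwards [ae_restrict_mem (measurableSet_Ioi.prod measurableSet_Ioc)] with p hp
      obtain ⟨hp1, hp2⟩ := hp
      have hu1 : (1:ℝ) < p.1 := hp1
      have hupos : (0:ℝ) < p.1 := lt_trans one_pos hu1
      have hbIcc : p.2 ∈ Set.Icc (0:ℝ) b₀ := ⟨hp2.1.le, hp2.2⟩
      have hAb := A_pos hz (hbsq _ hbIcc)
      have hAge : a₀ ≤ A z p.2 := A_ge (hbsq _ hbIcc)
      have hAle : A z p.2 ≤ z := A_le hz
      have hexp : Real.exp (-(A z p.2)*p.1) ≤ Real.exp (-a₀*p.1) :=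
        Real.exp_le_exp.2 (by nlinarith)
      have hwpos := w_pos hu1
      have hfrac0 : (0:ℝ) ≤ p.1 / Real.sqrt (p.1^2-1) := by positivity
      rw [Function.uncurry]
      calc ‖(A z p.2)⁻¹ * gd (A z p.2) p.2 p.1‖
          = (A z p.2)⁻¹ * ‖gd (A z p.2) p.2 p.1‖ := by
            rw [norm_mul, Real.norm_eq_abs ((A z p.2)⁻¹),
              abs_of_pos (inv_pos.2 hAb)]
        _ ≤ (A z p.2)⁻¹ * (|A z p.2| * Real.exp (-(A z p.2)*p.1)
            + |p.2| * (Real.exp (-(A z p.2)*p.1) * (p.1 / Real.sqrt (p.1^2-1)))) :=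
            mul_le_mul_of_nonneg_left (gd_bound hu1) (inv_pos.2 hAb).le
        _ ≤ a₀⁻¹ * (z * Real.exp (-a₀*p.1)
            + b₀ * (Real.exp (-a₀*p.1) * (p.1 / Real.sqrt (p.1^2-1)))) := by
            rw [abs_of_pos hAb, abs_of_nonneg hbIcc.1]
            have e1 := (Real.exp_pos (-(A z p.2)*p.1)).le
            have h1 : (A z p.2)⁻¹ ≤ a₀⁻¹ := by gcongr
            have ht1 : A z p.2 * Real.exp (-(A z p.2)*p.1) ≤ z * Real.exp (-a₀*p.1) :=
              mul_le_mul hAle hexp e1 hz.le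
            have ht2 : p.2 * (Real.exp (-(A z p.2)*p.1) * (p.1 / Real.sqrt (p.1^2-1)))
                ≤ b₀ * (Real.exp (-a₀*p.1) * (p.1 / Real.sqrt (p.1^2-1))) :=
              mul_le_mul hbIcc.2 (mul_le_mul_of_nonneg_right hexp hfrac0)
                (mul_nonneg e1 hfrac0) hb₀
            have hnn : 0 ≤ A z p.2 * Real.exp (-(A z p.2)*p.1)
                + p.2 * (Real.exp (-(A z p.2)*p.1) * (p.1 / Real.sqrt (p.1^2-1))) :=
              add_nonneg (mul_nonneg hAb.le e1)
                (mul_nonneg hbIcc.1 (mul_nonneg e1 hfrac0))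
            exact mul_le_mul h1 (by linarith) hnn (inv_pos.2 ha₀).le
        _ = (a₀⁻¹ * (z * Real.exp (-a₀*p.1)
            + b₀ * (Real.exp (-a₀*p.1) * (p.1 / Real.sqrt (p.1^2-1))))) * 1 := by ring
  -- Put everything together
  have h0 : (0:ℝ)^2 ≤ z^2/2 := by nlinarith
  have heq : (∫ u in Set.Ioi (1:ℝ), H z b₀ u) - ∫ u in Set.Ioi (1:ℝ), H z 0 u = 0 := by
    rw [← MeasureTheory.integral_sub (integrableOn_H hz hb2) (integrableOn_H hz h0)]
    rw [MeasureTheory.setIntegral_congr_fun measurableSet_Ioi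
      (fun u hu => step2 u hu)]
    rw [MeasureTheory.integral_integral_swap hprod]
    have hz0 : ∀ b ∈ Set.Ioc (0:ℝ) b₀,
        (∫ u in Set.Ioi (1:ℝ), (A z b)⁻¹ * gd (A z b) b u) = 0 := by
      intro b hb
      rw [MeasureTheory.integral_const_mul,
        integral_gd_eq_zero b (A_pos hz (hbsq b ⟨hb.1.le, hb.2⟩)), mul_zero]
    rw [MeasureTheory.setIntegral_congr_fun measurableSet_Ioc (fun b hb => hz0 b hb)]
    simp
  linarith

end K0Aux

theorem stmt0 (r1 r2 : ℝ) (hr1 : 0 ≤ r1) (hr2 : 0 ≤ r2) (hne : (r1, r2) ≠ (0, 0)) :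
    K0 (Real.sqrt (r1^2 + r2^2)) =
      ∫ u in Set.Ioi (1:ℝ),
        (Real.sqrt (u^2 - 1))⁻¹ * Real.exp (-((r1 + r2)/Real.sqrt 2) * u) *
          Real.cos ((r1 - r2)/Real.sqrt 2 * Real.sqrt (u^2 - 1)) := by
  have h2 : (0:ℝ) < Real.sqrt 2 := by positivity
  have hsum : 0 < r1^2 + r2^2 := by
    have hne' : ¬(r1 = 0 ∧ r2 = 0) := by simpa [Prod.ext_iff] using hne
    rcases not_and_or.1 hne' with h | h
    · positivity
    · positivity
  set z := Real.sqrt (r1^2 + r2^2) with hzdef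
  have hz : 0 < z := Real.sqrt_pos.2 hsum
  have hz2 : z^2 = r1^2 + r2^2 := Real.sq_sqrt hsum.le
  set b₀ := |r1 - r2| / Real.sqrt 2 with hb₀def
  have hb₀ : 0 ≤ b₀ := by positivity
  have hb₀sq : b₀^2 = (r1-r2)^2/2 := by
    rw [hb₀def, div_pow, sq_abs, Real.sq_sqrt (by norm_num : (0:ℝ) ≤ 2)]
  have hb2 : b₀^2 ≤ z^2/2 := by
    rw [hb₀sq, hz2]
    nlinarith [mul_nonneg hr1 hr2]
  have hA0 : K0Aux.A z 0 = z := by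
    unfold K0Aux.A
    rw [show z^2 - (0:ℝ)^2 = z^2 by ring, Real.sqrt_sq hz.le]
  have hAb : K0Aux.A z b₀ = (r1+r2)/Real.sqrt 2 := by
    unfold K0Aux.A
    rw [hz2, hb₀sq, show r1^2 + r2^2 - (r1-r2)^2/2 = ((r1+r2)/Real.sqrt 2)^2 by
      rw [div_pow, Real.sq_sqrt (by norm_num : (0:ℝ) ≤ 2)]; ring]
    exact Real.sqrt_sq (by positivity)
  have hkey := K0Aux.key hz hb₀ hb2
  have hL : K0 z = ∫ u in Set.Ioi (1:ℝ), K0Aux.H z 0 u := by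
    unfold K0 K0Aux.H
    apply MeasureTheory.setIntegral_congr_fun measurableSet_Ioi
    intro u hu
    rw [hA0]
    simp
  have hR : (∫ u in Set.Ioi (1:ℝ),
      (Real.sqrt (u^2 - 1))⁻¹ * Real.exp (-((r1 + r2)/Real.sqrt 2) * u) *
        Real.cos ((r1 - r2)/Real.sqrt 2 * Real.sqrt (u^2 - 1)))
      = ∫ u in Set.Ioi (1:ℝ), K0Aux.H z b₀ u := by
    apply MeasureTheory.setIntegral_congr_fun measurableSet_Ioi
    intro u hu
    dsimp only
    unfold K0Aux.H
    rw [hAb]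
    have hwnn : 0 ≤ Real.sqrt (u^2-1) := Real.sqrt_nonneg _
    have hcos : Real.cos ((r1-r2)/Real.sqrt 2 * Real.sqrt (u^2-1))
        = Real.cos (b₀ * Real.sqrt (u^2-1)) := by
      rw [← Real.cos_abs ((r1-r2)/Real.sqrt 2 * Real.sqrt (u^2-1)), abs_mul, abs_div,
        abs_of_nonneg h2.le, abs_of_nonneg hwnn, hb₀def]
    rw [hcos]
    ring
  rw [hL, hR]
  exact hkey.symm

end
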